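/- Variance bound for the gradient sum over one CorgiPile shuffle (bound of I₄). Suppose N ≥ 2 and the block-variance assumption holds: (1/N)·Σ_{l=1}^N ‖(1/b)·Σ_{i∈B_l} ∇f_i(x) − ∇F(x)‖² ≤ h_D·σ²/b for all x. Then for every fixed x ∈ ℝ^d, E_ψ‖Σ_{k=1}^{nb} ∇f_{ψ(k)}(x) − (n/N)·m·∇F(x)‖² ≤ (n·b·(N−n)/(N−1))·h_D·σ², where the expectation is over a CorgiPile shuffle ψ. -/

import Mathlib

open Finset

noncomputable section

/-- Euclidean space `ℝ^d`. -/
abbrev Eu (d : ℕ) : Type := EuclideanSpace ℝ (Fin d)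

/-- A CorgiPile shuffle: a set of `n` blocks (out of `N`) together with an injection
from the `n*b` positions onto the set of indices belonging to the chosen blocks. -/
def CorgiShuffle (N n b : ℕ) (blk : Fin (N * b) → Fin N) : Type :=
  { p : Finset (Fin N) × (Fin (n * b) → Fin (N * b)) //
      p.1.card = n ∧ Function.Injective p.2 ∧
      (∀ k, blk (p.2 k) ∈ p.1) ∧
      (∀ i, blk i ∈ p.1 → ∃ k, p.2 k = i) }

noncomputable instance (N n b : ℕ) (blk : Fin (N * b) → Fin N) :
    Fintype (CorgiShuffle N n b blk) := by
  unfold CorgiShuffle; exact Fintype.ofFinite _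

/-- The `l`-th block, as a finset of indices. -/
def blockSet {N b : ℕ} (blk : Fin (N * b) → Fin N) (l : Fin N) : Finset (Fin (N * b)) :=
  Finset.univ.filter (fun i => blk i = l)

/-- The average objective `F = (1/m) ∑ f i`, `m = N·b`. -/
def avgF {d m : ℕ} (f : Fin m → Eu d → ℝ) : Eu d → ℝ :=
  fun x => (∑ i, f i x) / m

/- ======================= auxiliary lemmas ======================= -/

lemma grad_avg {d m : ℕ} (f : Fin m → Eu d → ℝ) (hdiff : ∀ i, Differentiable ℝ (f i))
    (x : Eu d) :
    gradient (avgF f) x = ((m : ℝ))⁻¹ • ∑ i, gradient (f i) x := by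
  have h1 : avgF f = fun y => (m : ℝ)⁻¹ * ∑ i, f i y := by
    funext y; simp [avgF, div_eq_inv_mul]
  have hds : DifferentiableAt ℝ (fun y => ∑ i, f i y) x :=
    DifferentiableAt.fun_sum (fun i _ => (hdiff i x))
  rw [h1]
  unfold gradient
  rw [fderiv_const_mul hds, fderiv_fun_sum (fun i _ => hdiff i x), map_smul, map_sum]

lemma count_superset {α : Type*} [DecidableEq α] (s A : Finset α) (hA : A ⊆ s) (n : ℕ)
    (hn : A.card ≤ n) :
    ((s.powersetCard n).filter (fun S => A ⊆ S)).card
      = (s.card - A.card).choose (n - A.card) := by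
  rw [show s.card - A.card = (s \ A).card from (Finset.card_sdiff_of_subset hA).symm,
    ← Finset.card_powersetCard]
  refine Finset.card_nbij' (fun S => S \ A) (fun T => T ∪ A) ?_ ?_ ?_ ?_
  · intro S hS
    simp only [Finset.mem_coe, Finset.mem_filter, Finset.mem_powersetCard] at hS ⊢
    obtain ⟨⟨hSs, hScard⟩, hAS⟩ := hS
    exact ⟨Finset.sdiff_subset_sdiff hSs le_rfl, by rw [Finset.card_sdiff_of_subset hAS, hScard]⟩
  · intro T hT
    simp only [Finset.mem_coe, Finset.mem_filter, Finset.mem_powersetCard] at hT ⊢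
    obtain ⟨hTs, hTcard⟩ := hT
    have hdisj : Disjoint T A := Finset.disjoint_of_subset_left hTs Finset.sdiff_disjoint
    refine ⟨⟨Finset.union_subset (hTs.trans (Finset.sdiff_subset)) hA, ?_⟩,
      Finset.subset_union_right⟩
    rw [Finset.card_union_of_disjoint hdisj, hTcard]
    omega
  · intro S hS
    simp only [Finset.mem_coe, Finset.mem_filter, Finset.mem_powersetCard] at hS
    exact Finset.sdiff_union_of_subset hS.2
  · intro T hT
    simp only [Finset.mem_coe, Finset.mem_powersetCard] at hT
    have hdisj : Disjoint T A := Finset.disjoint_of_subset_left hT.1 Finset.sdiff_disjoint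
    exact Finset.union_sdiff_cancel_right hdisj

lemma count_pair {N n : ℕ} (hn1 : 1 ≤ n)
    (hcount : ∀ (A : Finset (Fin N)), A.card ≤ n →
      (((Finset.univ : Finset (Fin N)).powersetCard n).filter (fun S => A ⊆ S)).card
        = (N - A.card).choose (n - A.card))
    (l l' : Fin N) :
    (((Finset.univ : Finset (Fin N)).powersetCard n).filter
        (fun S => l ∈ S ∧ l' ∈ S)).card
      = if l = l' then (N - 1).choose (n - 1)
        else (if 2 ≤ n then (N - 2).choose (n - 2) else 0) := by
  classical
  by_cases h : l = l'
  · subst h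
    rw [if_pos rfl]
    have e : ((Finset.univ : Finset (Fin N)).powersetCard n).filter (fun S => l ∈ S ∧ l ∈ S)
        = ((Finset.univ : Finset (Fin N)).powersetCard n).filter
            (fun S => ({l} : Finset (Fin N)) ⊆ S) := by
      apply Finset.filter_congr; intro S _; simp
    rw [e, hcount {l} (by simpa using hn1)]
    simp
  · rw [if_neg h]
    by_cases h2 : 2 ≤ n
    · rw [if_pos h2]
      have e : ((Finset.univ : Finset (Fin N)).powersetCard n).filter
            (fun S => l ∈ S ∧ l' ∈ S)
          = ((Finset.univ : Finset (Fin N)).powersetCard n).filter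
              (fun S => ({l, l'} : Finset (Fin N)) ⊆ S) := by
        apply Finset.filter_congr; intro S _
        simp [Finset.insert_subset_iff]
      rw [e, hcount {l, l'} (by rw [Finset.card_pair h]; exact h2), Finset.card_pair h]
    · rw [if_neg h2]
      have hn : n = 1 := by omega
      rw [Finset.card_eq_zero, Finset.filter_eq_empty_iff]
      rintro S hS ⟨hl, hl'⟩
      rw [Finset.mem_powersetCard] at hS
      have hsub : ({l, l'} : Finset (Fin N)) ⊆ S := by
        simp [Finset.insert_subset_iff, hl, hl']
      have := Finset.card_le_card hsub
      rw [Finset.card_pair h, hS.2, hn] at this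
      omega

lemma sum_sq_expand {E : Type*} [NormedAddCommGroup E] [InnerProductSpace ℝ E]
    {N : ℕ} (P : Finset (Finset (Fin N))) (c1 c2 : ℕ)
    (hcount : ∀ l l' : Fin N,
      ((P.filter (fun S => l ∈ S ∧ l' ∈ S)).card) = if l = l' then c1 else c2)
    (v : Fin N → E) (hv : ∑ l, v l = 0) :
    ∑ S ∈ P, ‖∑ l ∈ S, v l‖ ^ 2 = ((c1 : ℝ) - (c2 : ℝ)) * ∑ l, ‖v l‖ ^ 2 := by
  classical
  have step1 : ∀ S : Finset (Fin N), ‖∑ l ∈ S, v l‖ ^ 2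
      = ∑ l, ∑ l', if l ∈ S ∧ l' ∈ S then (inner ℝ (v l) (v l') : ℝ) else 0 := by
    intro S
    have key : (∑ l, ∑ l', if l ∈ S ∧ l' ∈ S then (inner ℝ (v l) (v l') : ℝ) else 0)
        = ∑ l ∈ S, ∑ l' ∈ S, (inner ℝ (v l) (v l') : ℝ) := by
      have e1 : (∑ l, ∑ l', if l ∈ S ∧ l' ∈ S then (inner ℝ (v l) (v l') : ℝ) else 0)
          = ∑ l, if l ∈ S then (∑ l', if l' ∈ S then (inner ℝ (v l) (v l') : ℝ) else 0)
              else 0 := by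
        refine Finset.sum_congr rfl fun l _ => ?_
        by_cases hl : l ∈ S <;> simp [hl]
      rw [e1]
      simp_rw [Finset.sum_ite_mem, Finset.univ_inter]
    rw [key, ← real_inner_self_eq_norm_sq, sum_inner]
    exact Finset.sum_congr rfl fun l _ => inner_sum S v (v l)
  simp_rw [step1]
  rw [Finset.sum_comm]
  have step2 : ∀ l : Fin N, (∑ S ∈ P, ∑ l' : Fin N,
      if l ∈ S ∧ l' ∈ S then (inner ℝ (v l) (v l') : ℝ) else 0)
      = ∑ l' : Fin N, (if l = l' then (c1 : ℝ) else (c2 : ℝ)) * inner ℝ (v l) (v l') := by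
    intro l
    rw [Finset.sum_comm]
    refine Finset.sum_congr rfl fun l' _ => ?_
    rw [← Finset.sum_filter, Finset.sum_const, nsmul_eq_mul, hcount l l']
    split <;> simp
  simp_rw [step2]
  have step3 : ∀ l l' : Fin N,
      (if l = l' then (c1 : ℝ) else (c2 : ℝ)) * (inner ℝ (v l) (v l') : ℝ)
      = (c2 : ℝ) * inner ℝ (v l) (v l')
        + (if l = l' then ((c1 : ℝ) - c2) * (inner ℝ (v l) (v l') : ℝ) else 0) := by
    intro l l'
    by_cases h : l = l' <;> simp [h] <;> try ring
  simp_rw [step3, Finset.sum_add_distrib, Finset.sum_ite_eq, Finset.mem_univ, if_true]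
  have zero1 : ∑ l : Fin N, ∑ l' : Fin N, (c2 : ℝ) * (inner ℝ (v l) (v l') : ℝ) = 0 := by
    simp_rw [← Finset.mul_sum, ← inner_sum, ← sum_inner, hv]
    simp
  rw [zero1, zero_add, ← Finset.mul_sum]
  congr 1
  exact Finset.sum_congr rfl fun l _ => by rw [real_inner_self_eq_norm_sq]

lemma filter_mem_biUnion {N b : ℕ} (blk : Fin (N * b) → Fin N) (S : Finset (Fin N)) :
    (Finset.univ.filter fun i => blk i ∈ S) = S.biUnion (blockSet blk) := by
  classical
  ext i
  simp only [Finset.mem_filter, Finset.mem_univ, true_and, Finset.mem_biUnion]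
  constructor
  · intro h; exact ⟨blk i, h, by simp [blockSet]⟩
  · rintro ⟨l, hl, hi⟩
    simp only [blockSet, Finset.mem_filter, Finset.mem_univ, true_and] at hi
    rw [hi]; exact hl

lemma blockSet_pairwise_disjoint {N b : ℕ} (blk : Fin (N * b) → Fin N) :
    ∀ l ∈ (Finset.univ : Finset (Fin N)), ∀ l' ∈ (Finset.univ : Finset (Fin N)),
      l ≠ l' → Disjoint (blockSet blk l) (blockSet blk l') := by
  intro l _ l' _ hne
  rw [Finset.disjoint_left]
  intro i hi hi'
  simp only [blockSet, Finset.mem_filter] at hi hi'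
  exact hne (hi.2 ▸ hi'.2 ▸ rfl)

def shuffleEquiv (N n b : ℕ) (blk : Fin (N * b) → Fin N) :
    CorgiShuffle N n b blk ≃
      (Σ S : ((Finset.univ : Finset (Fin N)).powersetCard n),
        (Fin (n * b) ≃ {i : Fin (N * b) // blk i ∈ S.val})) where
  toFun ω := ⟨⟨ω.1.1, by rw [Finset.mem_powersetCard]; exact ⟨Finset.subset_univ _, ω.2.1⟩⟩,
    Equiv.ofBijective (fun k => ⟨ω.1.2 k, ω.2.2.2.1 k⟩)
      ⟨fun k k' h => ω.2.2.1 (congrArg Subtype.val h),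
       fun i => (ω.2.2.2.2 i.1 i.2).imp fun k hk => Subtype.ext hk⟩⟩
  invFun σ := ⟨(σ.1.1, fun k => (σ.2 k).1),
    (Finset.mem_powersetCard.1 σ.1.2).2,
    fun k k' h => σ.2.injective (Subtype.ext h),
    fun k => (σ.2 k).2,
    fun i hi => ⟨σ.2.symm ⟨i, hi⟩, by simp⟩⟩
  left_inv ω := rfl
  right_inv σ := Sigma.ext rfl (heq_of_eq (Equiv.ext fun k => Subtype.ext rfl))

lemma card_blk_subtype {N n b : ℕ} (blk : Fin (N * b) → Fin N)
    (hblk : ∀ l, (blockSet blk l).card = b) (S : Finset (Fin N)) (hS : S.card = n) :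
    Fintype.card {i : Fin (N * b) // blk i ∈ S} = n * b := by
  classical
  rw [Fintype.card_subtype, filter_mem_biUnion blk S,
    Finset.card_biUnion (fun l hl l' hl' hne =>
      blockSet_pairwise_disjoint blk l (Finset.mem_univ l) l' (Finset.mem_univ l') hne)]
  simp_rw [hblk]
  rw [Finset.sum_const, hS, smul_eq_mul]

lemma card_corgi {N n b : ℕ} (blk : Fin (N * b) → Fin N)
    (hblk : ∀ l, (blockSet blk l).card = b) :
    Fintype.card (CorgiShuffle N n b blk) = (n * b).factorial * N.choose n := by
  classical
  rw [Fintype.card_congr (shuffleEquiv N n b blk), Fintype.card_sigma]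
  have hterm : ∀ S : ((Finset.univ : Finset (Fin N)).powersetCard n),
      Fintype.card (Fin (n * b) ≃ {i : Fin (N * b) // blk i ∈ S.val})
        = (n * b).factorial := by
    intro S
    have hc : Fintype.card {i : Fin (N * b) // blk i ∈ S.val} = n * b :=
      card_blk_subtype blk hblk S.val (Finset.mem_powersetCard.1 S.2).2
    rw [Fintype.card_equiv (Fintype.equivOfCardEq (by rw [hc, Fintype.card_fin])),
      Fintype.card_fin]
  simp_rw [hterm]
  rw [Finset.sum_const, smul_eq_mul, Finset.card_univ, Fintype.card_coe,
    Finset.card_powersetCard, Finset.card_univ, Fintype.card_fin, mul_comm]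

/- ======================= main theorem ======================= -/

theorem variance_bound_gradient_sum_corgi_shuffle {d N n b : ℕ}
    (hN : 2 ≤ N) (hn1 : 1 ≤ n) (hnN : n ≤ N)
    (blk : Fin (N * b) → Fin N)
    (hblk : ∀ l, (blockSet blk l).card = b)
    (f : Fin (N * b) → Eu d → ℝ)
    (hdiff : ∀ i, Differentiable ℝ (f i))
    (hD sig : ℝ) (hhD : 0 ≤ hD) (hsig : 0 ≤ sig)
    (hblockvar : ∀ x : Eu d,
      (∑ l, ‖((b : ℝ))⁻¹ • (∑ i ∈ blockSet blk l, gradient (f i) x)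
          - gradient (avgF f) x‖ ^ 2) / (N : ℝ) ≤ hD * sig ^ 2 / (b : ℝ))
    (x : Eu d) :
    (∑ ω : CorgiShuffle N n b blk,
        ‖(∑ k : Fin (n * b), gradient (f (ω.val.2 k)) x)
          - (((n : ℝ) / (N : ℝ)) * ((N * b : ℕ) : ℝ)) • gradient (avgF f) x‖ ^ 2) /
      (Fintype.card (CorgiShuffle N n b blk) : ℝ)
      ≤ ((n : ℝ) * (b : ℝ) * ((N : ℝ) - (n : ℝ)) / ((N : ℝ) - 1)) * hD * sig ^ 2 := by
  classical
  -- trivial case b = 0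
  rcases Nat.eq_zero_or_pos b with hb0 | hb
  · subst hb0
    have hFin : (Fintype.card (Fin (n * 0))) = 0 := by simp
    have hc0 : ((n : ℝ) / (N : ℝ)) * ((N * 0 : ℕ) : ℝ) = 0 := by simp
    simp only [hc0, zero_smul, sub_zero]
    have : ∀ ω : CorgiShuffle N n 0 blk,
        ‖(∑ k : Fin (n * 0), gradient (f (ω.val.2 k)) x)‖ ^ 2 = 0 := by
      intro ω
      haveI : IsEmpty (Fin (n * 0)) := ⟨fun k => absurd k.2 (by omega)⟩
      rw [show (∑ k : Fin (n * 0), gradient (f (ω.val.2 k)) x) = 0 from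
        Finset.sum_of_isEmpty _, norm_zero]
      norm_num
    simp only [this, Finset.sum_const_zero, zero_div]
    have : ((n : ℝ) * ((0:ℕ) : ℝ) * ((N : ℝ) - (n : ℝ)) / ((N : ℝ) - 1)) * hD * sig ^ 2
        = 0 := by norm_num
    rw [this]
  -- main case b ≥ 1
  have hbR : (0 : ℝ) < (b : ℝ) := by exact_mod_cast hb
  have hNR : (0 : ℝ) < (N : ℝ) := by positivity
  have hNbR : ((N * b : ℕ) : ℝ) ≠ 0 := by
    push_cast; positivity
  set G : Eu d := gradient (avgF f) x with hGdef
  set gi : Fin (N * b) → Eu d := fun i => gradient (f i) x with hgidef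
  have hG : G = ((N * b : ℕ) : ℝ)⁻¹ • ∑ i, gi i := grad_avg f hdiff x
  set V : Fin N → Eu d := fun l => (∑ i ∈ blockSet blk l, gi i) - (b : ℝ) • G with hVdef
  -- the V l sum to zero
  have hsum_blocks : ∑ l, ∑ i ∈ blockSet blk l, gi i = ∑ i, gi i := by
    have := Finset.sum_fiberwise (Finset.univ : Finset (Fin (N * b))) blk gi
    simpa [blockSet] using this
  have hVsum : ∑ l, V l = 0 := by
    rw [hVdef]
    rw [Finset.sum_sub_distrib, hsum_blocks, Finset.sum_const, Finset.card_univ,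
      Fintype.card_fin, hG, smul_smul, ← Nat.cast_smul_eq_nsmul ℝ, smul_smul]
    rw [show ((N : ℝ) * ((b : ℝ) * ((N * b : ℕ) : ℝ)⁻¹)) = 1 by
      push_cast
      field_simp]
    rw [one_smul, sub_self]
  -- bound on T
  set T : ℝ := ∑ l, ‖V l‖ ^ 2 with hTdef
  have hTnn : 0 ≤ T := Finset.sum_nonneg fun l _ => by positivity
  have hT : T ≤ (N : ℝ) * (b : ℝ) * hD * sig ^ 2 := by
    have hbv : (∑ l, ‖((b : ℝ))⁻¹ • (∑ i ∈ blockSet blk l, gi i) - G‖ ^ 2) / (N : ℝ)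
        ≤ hD * sig ^ 2 / (b : ℝ) := hblockvar x
    have heq : ∀ l : Fin N, ‖((b : ℝ))⁻¹ • (∑ i ∈ blockSet blk l, gi i) - G‖ ^ 2
        = ((b : ℝ))⁻¹ ^ 2 * ‖V l‖ ^ 2 := by
      intro l
      have : ((b : ℝ))⁻¹ • (∑ i ∈ blockSet blk l, gi i) - G = ((b : ℝ))⁻¹ • V l := by
        rw [hVdef, smul_sub, smul_smul, inv_mul_cancel₀ (ne_of_gt hbR), one_smul]
      rw [this, norm_smul, mul_pow, Real.norm_eq_abs, abs_of_nonneg (by positivity)]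
    simp_rw [heq, ← Finset.mul_sum, ← hTdef] at hbv
    rw [div_le_div_iff₀ hNR hbR] at hbv
    calc T = ((b : ℝ) ^ 2 / (b : ℝ)) * (((b : ℝ))⁻¹ ^ 2 * T * (b : ℝ)) / (b : ℝ) * (b:ℝ) := by
            field_simp
      _ ≤ (N : ℝ) * (b : ℝ) * hD * sig ^ 2 := by
            rw [div_mul_cancel₀ _ (ne_of_gt hbR)]
            calc ((b : ℝ) ^ 2 / (b : ℝ)) * (((b : ℝ))⁻¹ ^ 2 * T * (b : ℝ))
                ≤ ((b : ℝ) ^ 2 / (b : ℝ)) * (hD * sig ^ 2 * (N : ℝ)) := by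
                  apply mul_le_mul_of_nonneg_left hbv (by positivity)
              _ = (N : ℝ) * (b : ℝ) * hD * sig ^ 2 := by field_simp
  -- counting
  set P : Finset (Finset (Fin N)) := (Finset.univ : Finset (Fin N)).powersetCard n with hPdef
  set c1 : ℕ := (N - 1).choose (n - 1) with hc1def
  set c2 : ℕ := if 2 ≤ n then (N - 2).choose (n - 2) else 0 with hc2def
  have hcountA : ∀ (A : Finset (Fin N)), A.card ≤ n →
      ((P.filter (fun S => A ⊆ S)).card) = (N - A.card).choose (n - A.card) := by
    intro A hA
    rw [hPdef, count_superset Finset.univ A (Finset.subset_univ A) n hA, Finset.card_univ,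
      Fintype.card_fin]
  have hcount : ∀ l l' : Fin N,
      ((P.filter (fun S => l ∈ S ∧ l' ∈ S)).card) = if l = l' then c1 else c2 :=
    count_pair hn1 hcountA
  have hkey : ∑ S ∈ P, ‖∑ l ∈ S, V l‖ ^ 2 = ((c1 : ℝ) - (c2 : ℝ)) * T :=
    sum_sq_expand P c1 c2 hcount V hVsum
  -- choose identities
  have hid1 : N * c1 = n * N.choose n := by
    have h := Nat.add_one_mul_choose_eq (N - 1) (n - 1)
    rw [show N - 1 + 1 = N from by omega, show n - 1 + 1 = n from by omega] at h
    rw [hc1def, h]; ring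
  have hid2 : (N - 1) * c2 = (n - 1) * c1 := by
    rw [hc2def, hc1def]
    by_cases h2 : 2 ≤ n
    · rw [if_pos h2]
      have h := Nat.add_one_mul_choose_eq (N - 2) (n - 2)
      rw [show N - 2 + 1 = N - 1 by omega, show n - 2 + 1 = n - 1 by omega] at h
      rw [h]; ring
    · rw [if_neg h2, show n - 1 = 0 by omega]
      ring
  have hCpos : 0 < N.choose n := Nat.choose_pos hnN
  -- rewrite the big sum over shuffles
  set c : ℝ := ((n : ℝ) / (N : ℝ)) * ((N * b : ℕ) : ℝ) with hcdef
  set Gfun : CorgiShuffle N n b blk → ℝ := fun ω =>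
    ‖(∑ k : Fin (n * b), gradient (f (ω.val.2 k)) x) - c • G‖ ^ 2 with hGfundef
  have hGfun_const : ∀ (S : ((Finset.univ : Finset (Fin N)).powersetCard n))
      (e : Fin (n * b) ≃ {i : Fin (N * b) // blk i ∈ S.val}),
      Gfun ((shuffleEquiv N n b blk).symm ⟨S, e⟩) = ‖∑ l ∈ S.val, V l‖ ^ 2 := by
    intro S e
    have hS : S.val.card = n := (Finset.mem_powersetCard.1 S.2).2
    have h1 : ((shuffleEquiv N n b blk).symm ⟨S, e⟩).val.2 = fun k => ((e k) : Fin (N * b)) :=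
      rfl
    rw [hGfundef]
    simp only [h1]
    have h2 : (∑ k : Fin (n * b), gradient (f ((e k) : Fin (N * b))) x)
        = ∑ i : {i : Fin (N * b) // blk i ∈ S.val}, gi (i : Fin (N * b)) :=
      Equiv.sum_comp e (fun i => gi (i : Fin (N * b)))
    rw [h2, ← Finset.sum_subtype (Finset.univ.filter fun i => blk i ∈ S.val)
      (fun i => by simp) gi]
    rw [filter_mem_biUnion blk S.val,
      Finset.sum_biUnion (fun l _ l' _ hne =>
        blockSet_pairwise_disjoint blk l (Finset.mem_univ l) l' (Finset.mem_univ l') hne)]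
    have h3 : ∑ l ∈ S.val, V l
        = (∑ l ∈ S.val, ∑ i ∈ blockSet blk l, gi i) - c • G := by
      rw [hVdef, Finset.sum_sub_distrib, Finset.sum_const, hS, ← Nat.cast_smul_eq_nsmul ℝ,
        smul_smul]
      congr 2
      rw [hcdef]
      push_cast
      field_simp
    rw [h3]
  have hsum : (∑ ω : CorgiShuffle N n b blk, Gfun ω)
      = ((n * b).factorial : ℝ) * (((c1 : ℝ) - (c2 : ℝ)) * T) := by
    rw [← Equiv.sum_comp (shuffleEquiv N n b blk).symm Gfun]
    rw [← Finset.univ_sigma_univ, Finset.sum_sigma]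
    have hinner : ∀ S : ((Finset.univ : Finset (Fin N)).powersetCard n),
        (∑ e ∈ (Finset.univ : Finset (Fin (n * b) ≃ {i : Fin (N * b) // blk i ∈ S.val})),
          Gfun ((shuffleEquiv N n b blk).symm ⟨S, e⟩))
        = ((n * b).factorial : ℝ) * ‖∑ l ∈ S.val, V l‖ ^ 2 := by
      intro S
      rw [Finset.sum_congr rfl (fun e _ => hGfun_const S e), Finset.sum_const,
        Finset.card_univ, nsmul_eq_mul]
      congr 2
      have hc' : Fintype.card {i : Fin (N * b) // blk i ∈ S.val} = n * b :=
        card_blk_subtype blk hblk S.val (Finset.mem_powersetCard.1 S.2).2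
      rw [Fintype.card_equiv (Fintype.equivOfCardEq (by rw [hc', Fintype.card_fin])),
        Fintype.card_fin]
    rw [Finset.sum_congr rfl (fun S _ => hinner S), ← Finset.mul_sum]
    congr 1
    rw [← hkey, ← hPdef]
    exact Finset.sum_coe_sort P (fun S => ‖∑ l ∈ S, V l‖ ^ 2)
  -- put everything together
  have hcard : (Fintype.card (CorgiShuffle N n b blk) : ℝ)
      = ((n * b).factorial : ℝ) * (N.choose n : ℝ) := by
    rw [card_corgi blk hblk]; push_cast; ring
  rw [show (∑ ω : CorgiShuffle N n b blk,
      ‖(∑ k : Fin (n * b), gradient (f (ω.val.2 k)) x)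
        - (((n : ℝ) / (N : ℝ)) * ((N * b : ℕ) : ℝ)) • gradient (avgF f) x‖ ^ 2)
      = ∑ ω : CorgiShuffle N n b blk, Gfun ω from rfl]
  rw [hsum, hcard, mul_div_mul_left _ _ (by positivity : ((n * b).factorial : ℝ) ≠ 0)]
  have hRHS : ((n : ℝ) * (b : ℝ) * ((N : ℝ) - (n : ℝ)) / ((N : ℝ) - 1)) * hD * sig ^ 2
      = ((n : ℝ) * (b : ℝ) * ((N : ℝ) - (n : ℝ)) * hD * sig ^ 2) / ((N : ℝ) - 1) := by
    ring
  rw [hRHS, div_le_div_iff₀ (by exact_mod_cast hCpos) (by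
    have : (2 : ℝ) ≤ (N : ℝ) := by exact_mod_cast hN
    linarith)]
  -- cast identities to the reals
  have hid1R : (N : ℝ) * (c1 : ℝ) = (n : ℝ) * (N.choose n : ℝ) := by exact_mod_cast hid1
  have hid2R : ((N : ℝ) - 1) * (c2 : ℝ) = ((n : ℝ) - 1) * (c1 : ℝ) := by
    have := congrArg (Nat.cast : ℕ → ℝ) hid2
    push_cast [Nat.cast_sub (by omega : 1 ≤ N), Nat.cast_sub hn1] at this
    convert this using 2 <;> push_cast <;> ring
  have hNn : (n : ℝ) ≤ (N : ℝ) := by exact_mod_cast hnN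
  have hc1nn : (0 : ℝ) ≤ (c1 : ℝ) := Nat.cast_nonneg c1
  have e1 : ((c1 : ℝ) - (c2 : ℝ)) * ((N : ℝ) - 1) = (c1 : ℝ) * ((N : ℝ) - (n : ℝ)) := by
    linear_combination (-1 : ℝ) * hid2R
  calc ((c1 : ℝ) - (c2 : ℝ)) * T * ((N : ℝ) - 1)
      = (c1 : ℝ) * ((N : ℝ) - (n : ℝ)) * T := by linear_combination T * e1
    _ ≤ (c1 : ℝ) * ((N : ℝ) - (n : ℝ)) * ((N : ℝ) * (b : ℝ) * hD * sig ^ 2) := by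
        apply mul_le_mul_of_nonneg_left hT
        have : (0 : ℝ) ≤ (N : ℝ) - (n : ℝ) := by linarith
        positivity
    _ = (n : ℝ) * (b : ℝ) * ((N : ℝ) - (n : ℝ)) * hD * sig ^ 2 * (N.choose n : ℝ) := by
        linear_combination ((N : ℝ) - (n : ℝ)) * (b : ℝ) * hD * sig ^ 2 * hid1R

end
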